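/- Let (Ω, F, P_0) be a probability space and let Λ_n, Λ ∈ L^1(P_0) be nonnegative random variables such that ∫ Λ_n g dP_0 → ∫ Λ g dP_0 for every bounded measurable g : Ω → ℝ (i.e. Λ_n → Λ in the weak topology σ(L^1, L^∞)). Then ∫ Λ log Λ dP_0 ≤ liminf_{n→∞} ∫ Λ_n log Λ_n dP_0, where all integrals take values in (−∞, ∞] (they are well defined since x log x ≥ −e^{−1}), i.e. the functional Λ ↦ E_0[Λ log Λ] is sequentially lower semicontinuous for the weak L^1 topology on the set of nonnegative elements of L^1(P_0). -/

import Mathlib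

open MeasureTheory Filter

noncomputable def trunc (k : ℕ) (x : ℝ) : ℝ :=
  if x = 0 then -((k : ℝ) + 1) else min (max (Real.log x + 1) (-((k : ℝ) + 1))) ((k : ℝ) + 1)

lemma trunc_measurable (k : ℕ) : Measurable (trunc k) := by
  unfold trunc
  exact Measurable.ite (measurableSet_eq) measurable_const
    (((Real.measurable_log.add_const 1).max measurable_const).min measurable_const)

lemma trunc_abs_le (k : ℕ) (x : ℝ) : |trunc k x| ≤ (k : ℝ) + 1 := by
  have hk : (0:ℝ) ≤ k := Nat.cast_nonneg k
  unfold trunc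
  split_ifs with h
  · rw [abs_neg, abs_of_nonneg (by positivity)]
  · rw [abs_le]
    exact ⟨le_min (le_max_right _ _) (by linarith), min_le_right _ _⟩

lemma young' (x t : ℝ) (hx : 0 ≤ x) : x * t - Real.exp (t - 1) ≤ x * Real.log x := by
  rcases hx.eq_or_lt with h | h
  · simp [← h]; positivity
  · have h1 := Real.add_one_le_exp (t - Real.log x - 1)
    have h2 : Real.exp (t - Real.log x - 1) = Real.exp (t - 1) / x := by
      rw [show t - Real.log x - 1 = (t - 1) - Real.log x by ring, Real.exp_sub, Real.exp_log h]
    rw [h2] at h1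
    have h3 : Real.exp (t - 1) / x * x = Real.exp (t - 1) := div_mul_cancel₀ _ (ne_of_gt h)
    nlinarith

lemma trunc_nonneg (k : ℕ) (x : ℝ) (hx : 0 ≤ x) :
    0 ≤ x * trunc k x - Real.exp (trunc k x - 1) + Real.exp (-1) := by
  have hk : (0:ℝ) ≤ k := Nat.cast_nonneg k
  unfold trunc
  split_ifs with h
  · subst h
    have : Real.exp (-((k:ℝ)+1) - 1) ≤ Real.exp (-1) := Real.exp_le_exp.mpr (by linarith)
    linarith
  · have hx' : 0 < x := lt_of_le_of_ne hx (Ne.symm h)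
    rcases le_or_gt (Real.log x + 1) (-((k:ℝ)+1)) with h1 | h1
    · have ht : min (max (Real.log x + 1) (-((k : ℝ) + 1))) ((k : ℝ) + 1)
          = -((k:ℝ)+1) := by
        rw [max_eq_right h1, min_eq_left (by linarith)]
      rw [ht]
      have hxle : x ≤ Real.exp (-((k:ℝ)+2)) := by
        rw [← Real.exp_log hx']
        exact Real.exp_le_exp.mpr (by linarith)
      have h2 : ((k:ℝ)+2) ≤ Real.exp ((k:ℝ)+1) := by
        have := Real.add_one_le_exp ((k:ℝ)+1)
        linarith
      have h3 : ((k:ℝ)+2) * Real.exp (-((k:ℝ)+2)) ≤ Real.exp (-1) := by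
        have := mul_le_mul_of_nonneg_right h2 (Real.exp_nonneg (-((k:ℝ)+2)))
        rwa [← Real.exp_add, show (k:ℝ)+1 + -((k:ℝ)+2) = -1 by ring] at this
      have h4 : x * ((k:ℝ)+1) ≤ ((k:ℝ)+1) * Real.exp (-((k:ℝ)+2)) := by
        rw [mul_comm]; exact mul_le_mul_of_nonneg_left hxle (by positivity)
      have h5 : Real.exp (-((k:ℝ)+1) - 1) = Real.exp (-((k:ℝ)+2)) := by ring_nf
      nlinarith [Real.exp_nonneg (-((k:ℝ)+2))]
    · rcases le_or_gt ((k:ℝ)+1) (Real.log x + 1) with h2 | h2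
      · have ht : min (max (Real.log x + 1) (-((k : ℝ) + 1))) ((k : ℝ) + 1)
            = (k:ℝ)+1 := by
          rw [max_eq_left (by linarith), min_eq_right h2]
        rw [ht]
        have hxge : Real.exp (k:ℝ) ≤ x := by
          rw [← Real.exp_log hx']
          exact Real.exp_le_exp.mpr (by linarith)
        have : Real.exp ((k:ℝ)+1-1) = Real.exp (k:ℝ) := by ring_nf
        rw [this]
        nlinarith [Real.exp_nonneg (-1:ℝ), Real.exp_nonneg (k:ℝ)]
      · have ht : min (max (Real.log x + 1) (-((k : ℝ) + 1))) ((k : ℝ) + 1)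
            = Real.log x + 1 := by
          rw [max_eq_left h1.le, min_eq_left h2.le]
        rw [ht, show Real.log x + 1 - 1 = Real.log x by ring, Real.exp_log hx']
        have := young' x 0 hx
        simp at this
        nlinarith

lemma trunc_tendsto (x : ℝ) (hx : 0 ≤ x) :
    Tendsto (fun k : ℕ => x * trunc k x - Real.exp (trunc k x - 1) + Real.exp (-1)) atTop
      (nhds (x * Real.log x + Real.exp (-1))) := by
  rcases eq_or_lt_of_le hx with h | h
  · subst h
    simp only [trunc, if_pos rfl, Real.log_zero, mul_zero, zero_mul, zero_sub, zero_add]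
    have ha : Tendsto (fun k : ℕ => (k:ℝ) + 2) atTop atTop :=
      tendsto_atTop_add_const_right _ 2 tendsto_natCast_atTop_atTop
    have h1 : Tendsto (fun k : ℕ => -((k:ℝ)+1) - 1) atTop atBot :=
      (tendsto_neg_atTop_atBot.comp ha).congr (fun k => by simp; ring)
    have h2 : Tendsto (fun k : ℕ => Real.exp (-((k:ℝ)+1) - 1)) atTop (nhds 0) :=
      Real.tendsto_exp_atBot.comp h1
    have := (h2.neg).add_const (Real.exp (-1))
    simpa using this
  · obtain ⟨N, hN⟩ := exists_nat_ge |Real.log x + 1|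
    apply Tendsto.congr' _ tendsto_const_nhds
    filter_upwards [eventually_ge_atTop N] with k hk
    have hkN : |Real.log x + 1| ≤ (k:ℝ) + 1 := by
      calc |Real.log x + 1| ≤ (N:ℝ) := hN
        _ ≤ (k:ℝ) := Nat.cast_le.mpr hk
        _ ≤ (k:ℝ) + 1 := by linarith
    rw [abs_le] at hkN
    have ht : trunc k x = Real.log x + 1 := by
      unfold trunc
      rw [if_neg (ne_of_gt h), max_eq_left hkN.1, min_eq_left hkN.2]
    rw [ht, show Real.log x + 1 - 1 = Real.log x by ring, Real.exp_log h]
    ring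

lemma ofReal_max_zero (a : ℝ) : ENNReal.ofReal (max a 0) = ENNReal.ofReal a := by
  rcases le_total a 0 with h | h
  · rw [max_eq_right h, ENNReal.ofReal_zero, ENNReal.ofReal_of_nonpos h]
  · rw [max_eq_left h]

lemma ofReal_integral_le {Ω : Type*} [MeasurableSpace Ω] {μ : Measure Ω} {f : Ω → ℝ}
    (hf : Integrable f μ) :
    ENNReal.ofReal (∫ ω, f ω ∂μ) ≤ ∫⁻ ω, ENNReal.ofReal (f ω) ∂μ := by
  calc ENNReal.ofReal (∫ ω, f ω ∂μ) ≤ ENNReal.ofReal (∫ ω, max (f ω) 0 ∂μ) :=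
        ENNReal.ofReal_le_ofReal (integral_mono hf hf.pos_part fun ω => le_max_left _ _)
    _ = ∫⁻ ω, ENNReal.ofReal (max (f ω) 0) ∂μ :=
        ofReal_integral_eq_lintegral_ofReal hf.pos_part (ae_of_all _ fun ω => le_max_right _ _)
    _ = ∫⁻ ω, ENNReal.ofReal (f ω) ∂μ := by simp [ofReal_max_zero]


/-- The entropy functional `Λ ↦ E₀[Λ log Λ]` is sequentially lower
semicontinuous for the weak topology `σ(L¹, L∞)` on nonnegative elements of `L¹(P₀)`.
Since `E₀[Λ log Λ]` takes values in `(-∞, ∞]`, it is encoded (shifting by the constant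
`e⁻¹`, using `x log x ≥ -e⁻¹`) as the `ℝ≥0∞`-valued functional
`Λ ↦ ∫⁻ ENNReal.ofReal (Λ log Λ + e⁻¹) dP₀`; the stated inequality is equivalent to
`∫ Λ log Λ dP₀ ≤ liminf ∫ Λₙ log Λₙ dP₀` in `(-∞, ∞]`. -/
theorem stmt10 {Ω : Type*} [m0 : MeasurableSpace Ω] (P₀ : Measure Ω) [IsProbabilityMeasure P₀]
    (Λ : ℕ → Ω → ℝ) (Λlim : Ω → ℝ)
    (hmeas : ∀ n, Measurable (Λ n)) (hlimmeas : Measurable Λlim)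
    (hint : ∀ n, Integrable (Λ n) P₀) (hlimint : Integrable Λlim P₀)
    (hpos : ∀ n ω, 0 ≤ Λ n ω) (hlimpos : ∀ ω, 0 ≤ Λlim ω)
    (hconv : ∀ g : Ω → ℝ, Measurable g → (∃ C, ∀ ω, |g ω| ≤ C) →
      Tendsto (fun n => ∫ ω, Λ n ω * g ω ∂P₀) atTop (nhds (∫ ω, Λlim ω * g ω ∂P₀))) :
    (∫⁻ ω, ENNReal.ofReal (Λlim ω * Real.log (Λlim ω) + Real.exp (-1)) ∂P₀)
      ≤ liminf
          (fun n => ∫⁻ ω, ENNReal.ofReal (Λ n ω * Real.log (Λ n ω) + Real.exp (-1)) ∂P₀)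
          atTop := by
  set L := liminf
      (fun n => ∫⁻ ω, ENNReal.ofReal (Λ n ω * Real.log (Λ n ω) + Real.exp (-1)) ∂P₀) atTop
  set T : ℕ → Ω → ℝ := fun k ω => trunc k (Λlim ω) with hT
  have hTmeas : ∀ k, Measurable (T k) := fun k => (trunc_measurable k).comp hlimmeas
  have hTbdd : ∀ k ω, |T k ω| ≤ (k:ℝ) + 1 := fun k ω => trunc_abs_le k (Λlim ω)
  -- integrability of the various pieces
  have hexpint : ∀ k, Integrable (fun ω => Real.exp (T k ω - 1)) P₀ := by
    intro k
    refine ⟨(Real.measurable_exp.comp ((hTmeas k).sub_const 1)).aestronglyMeasurable,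
      HasFiniteIntegral.of_bounded (C := Real.exp (k:ℝ)) (ae_of_all _ fun ω => ?_)⟩
    rw [Real.norm_eq_abs, abs_of_nonneg (Real.exp_nonneg _)]
    apply Real.exp_le_exp.mpr
    have := (abs_le.mp (hTbdd k ω)).2
    linarith
  have hmulint : ∀ n k, Integrable (fun ω => Λ n ω * T k ω) P₀ := by
    intro n k
    have := (hint n).bdd_mul (hTmeas k).aestronglyMeasurable
      (c := (k:ℝ)+1) (ae_of_all _ fun ω => by rw [Real.norm_eq_abs]; exact hTbdd k ω)
    exact this.congr (ae_of_all _ fun ω => mul_comm _ _)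
  have hmullimint : ∀ k, Integrable (fun ω => Λlim ω * T k ω) P₀ := by
    intro k
    have := hlimint.bdd_mul (hTmeas k).aestronglyMeasurable
      (c := (k:ℝ)+1) (ae_of_all _ fun ω => by rw [Real.norm_eq_abs]; exact hTbdd k ω)
    exact this.congr (ae_of_all _ fun ω => mul_comm _ _)
  have hFint : ∀ n k,
      Integrable (fun ω => Λ n ω * T k ω - Real.exp (T k ω - 1) + Real.exp (-1)) P₀ :=
    fun n k => (((hmulint n k).sub (hexpint k)).add (integrable_const _))
  have hFlimint : ∀ k,
      Integrable (fun ω => Λlim ω * T k ω - Real.exp (T k ω - 1) + Real.exp (-1)) P₀ :=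
    fun k => (((hmullimint k).sub (hexpint k)).add (integrable_const _))
  -- integral decomposition
  have hFeq : ∀ n k,
      (∫ ω, (Λ n ω * T k ω - Real.exp (T k ω - 1) + Real.exp (-1)) ∂P₀)
        = (∫ ω, Λ n ω * T k ω ∂P₀) - (∫ ω, Real.exp (T k ω - 1) ∂P₀) + Real.exp (-1) := by
    intro n k
    have hsub : Integrable (fun ω => Λ n ω * T k ω - Real.exp (T k ω - 1)) P₀ :=
      (hmulint n k).sub (hexpint k)
    rw [integral_add hsub (integrable_const _), integral_sub (hmulint n k) (hexpint k)]
    simp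
  have hFlimeq : ∀ k,
      (∫ ω, (Λlim ω * T k ω - Real.exp (T k ω - 1) + Real.exp (-1)) ∂P₀)
        = (∫ ω, Λlim ω * T k ω ∂P₀) - (∫ ω, Real.exp (T k ω - 1) ∂P₀) + Real.exp (-1) := by
    intro k
    have hsub : Integrable (fun ω => Λlim ω * T k ω - Real.exp (T k ω - 1)) P₀ :=
      (hmullimint k).sub (hexpint k)
    rw [integral_add hsub (integrable_const _), integral_sub (hmullimint k) (hexpint k)]
    simp
  -- key: for every k, ofReal (∫ Flim k) ≤ L
  have key : ∀ k : ℕ,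
      ENNReal.ofReal (∫ ω, (Λlim ω * T k ω - Real.exp (T k ω - 1) + Real.exp (-1)) ∂P₀) ≤ L := by
    intro k
    -- per-n inequality
    have hn : ∀ n, ENNReal.ofReal
          (∫ ω, (Λ n ω * T k ω - Real.exp (T k ω - 1) + Real.exp (-1)) ∂P₀)
        ≤ ∫⁻ ω, ENNReal.ofReal (Λ n ω * Real.log (Λ n ω) + Real.exp (-1)) ∂P₀ := by
      intro n
      refine (ofReal_integral_le (hFint n k)).trans (lintegral_mono fun ω => ?_)
      apply ENNReal.ofReal_le_ofReal
      have := young' (Λ n ω) (T k ω) (hpos n ω)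
      linarith
    -- convergence in n
    have htend : Tendsto
        (fun n => ∫ ω, (Λ n ω * T k ω - Real.exp (T k ω - 1) + Real.exp (-1)) ∂P₀) atTop
        (nhds (∫ ω, (Λlim ω * T k ω - Real.exp (T k ω - 1) + Real.exp (-1)) ∂P₀)) := by
      rw [hFlimeq k]
      have hc := hconv (T k) (hTmeas k) ⟨(k:ℝ)+1, hTbdd k⟩
      have := (hc.sub_const (∫ ω, Real.exp (T k ω - 1) ∂P₀)).add_const (Real.exp (-1))
      exact this.congr fun n => (hFeq n k).symm
    have htend2 := (ENNReal.continuous_ofReal.tendsto _).comp htend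
    calc ENNReal.ofReal (∫ ω, (Λlim ω * T k ω - Real.exp (T k ω - 1) + Real.exp (-1)) ∂P₀)
        = liminf (fun n => ENNReal.ofReal
            (∫ ω, (Λ n ω * T k ω - Real.exp (T k ω - 1) + Real.exp (-1)) ∂P₀)) atTop :=
          htend2.liminf_eq.symm
      _ ≤ L := liminf_le_liminf (Eventually.of_forall hn)
  -- now pass to the limit in k using Fatou
  have hptconv : ∀ ω, Tendsto
      (fun k => ENNReal.ofReal (Λlim ω * T k ω - Real.exp (T k ω - 1) + Real.exp (-1))) atTop
      (nhds (ENNReal.ofReal (Λlim ω * Real.log (Λlim ω) + Real.exp (-1)))) :=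
    fun ω => (ENNReal.continuous_ofReal.tendsto _).comp (trunc_tendsto (Λlim ω) (hlimpos ω))
  have hmeasF : ∀ k, Measurable (fun ω =>
      ENNReal.ofReal (Λlim ω * T k ω - Real.exp (T k ω - 1) + Real.exp (-1))) := by
    intro k
    exact (((hlimmeas.mul (hTmeas k)).sub
      (Real.measurable_exp.comp ((hTmeas k).sub_const 1))).add_const _).ennreal_ofReal
  calc (∫⁻ ω, ENNReal.ofReal (Λlim ω * Real.log (Λlim ω) + Real.exp (-1)) ∂P₀)
      = ∫⁻ ω, liminf (fun k => ENNReal.ofReal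
          (Λlim ω * T k ω - Real.exp (T k ω - 1) + Real.exp (-1))) atTop ∂P₀ :=
        lintegral_congr fun ω => ((hptconv ω).liminf_eq).symm
    _ ≤ liminf (fun k => ∫⁻ ω, ENNReal.ofReal
          (Λlim ω * T k ω - Real.exp (T k ω - 1) + Real.exp (-1)) ∂P₀) atTop :=
        lintegral_liminf_le hmeasF
    _ = liminf (fun k => ENNReal.ofReal
          (∫ ω, (Λlim ω * T k ω - Real.exp (T k ω - 1) + Real.exp (-1)) ∂P₀)) atTop := by
        apply liminf_congr
        apply Eventually.of_forall
        intro k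
        exact (ofReal_integral_eq_lintegral_ofReal (hFlimint k)
          (ae_of_all _ fun ω => trunc_nonneg k (Λlim ω) (hlimpos ω))).symm
    _ ≤ liminf (fun _ : ℕ => L) atTop := liminf_le_liminf (Eventually.of_forall key)
    _ = L := liminf_const L
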